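/- With V and notation as above, and D the n×p matrix with rows μⱼₖ fⱼᵀ (fⱼ ∈ ℝᵖ the regression vector at time j), the quasi-information matrix satisfies Dᵀ V⁻¹ D = Fᵀ U F − (b/(1 + b Σⱼ uⱼ)) Fᵀ u uᵀ F, where F is the J×p matrix with rows fⱼᵀ, U = diag(u₁,…,u_J), and u = (u₁,…,u_J)ᵀ. -/

import Mathlib

open Matrix Finset

lemma sum_sigma_fib {J : ℕ} {n : Fin J → ℕ} (g : (Σ j : Fin J, Fin (n j)) → ℝ) :
    ∑ i, g i = ∑ j, ∑ k, g ⟨j, k⟩ := by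
  rw [← Finset.univ_sigma_univ, Finset.sum_sigma]

lemma sum_fst_ite {J : ℕ} {n : Fin J → ℕ} (j₀ : Fin J) (a : (Σ j : Fin J, Fin (n j)) → ℝ) :
    ∑ i : Σ j : Fin J, Fin (n j), (if j₀ = i.1 then a i else 0) = ∑ k, a ⟨j₀, k⟩ := by
  rw [sum_sigma_fib]
  have : ∀ j : Fin J, ∑ k, (if j₀ = j then a ⟨j, k⟩ else 0)
      = if j₀ = j then ∑ k, a ⟨j, k⟩ else 0 := by
    intro j; split <;> simp
  simp_rw [this, Finset.sum_ite_eq, Finset.mem_univ, if_true]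

lemma sum_eq_ite {α : Type*} [Fintype α] [DecidableEq α] (i : α) (a : α → ℝ) :
    ∑ i' : α, (if i = i' then a i' else 0) = a i := by
  rw [Finset.sum_ite_eq]; simp

theorem quasi_information_representation {J p : ℕ} (n : Fin J → ℕ)
    (μ : (Σ j : Fin J, Fin (n j)) → ℝ) (f : Fin J → Fin p → ℝ) (b c : ℝ)
    (hμ : ∀ i, 0 < μ i) (hb : 0 ≤ b) (hc : 0 ≤ c) :
    letI s : Fin J → ℝ := fun j => ∑ k, μ ⟨j, k⟩
    letI u : Fin J → ℝ := fun j => s j / (1 + c * s j)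
    letI V : Matrix (Σ j : Fin J, Fin (n j)) (Σ j : Fin J, Fin (n j)) ℝ :=
      Matrix.of fun i i' =>
        (if i = i' then μ i else 0) + (if i.1 = i'.1 then c * μ i * μ i' else 0)
          + b * μ i * μ i'
    letI D : Matrix (Σ j : Fin J, Fin (n j)) (Fin p) ℝ :=
      Matrix.of fun i l => μ i * f i.1 l
    letI F : Matrix (Fin J) (Fin p) ℝ := Matrix.of fun j l => f j l
    Dᵀ * V⁻¹ * D =
      Fᵀ * Matrix.diagonal u * F
        - (b / (1 + b * ∑ j, u j)) • (Fᵀ * vecMulVec u u * F) := by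
  classical
  let s : Fin J → ℝ := fun j => ∑ k, μ ⟨j, k⟩
  let u : Fin J → ℝ := fun j => s j / (1 + c * s j)
  let V : Matrix (Σ j : Fin J, Fin (n j)) (Σ j : Fin J, Fin (n j)) ℝ :=
    Matrix.of fun i i' =>
      (if i = i' then μ i else 0) + (if i.1 = i'.1 then c * μ i * μ i' else 0)
        + b * μ i * μ i'
  let D : Matrix (Σ j : Fin J, Fin (n j)) (Fin p) ℝ :=
    Matrix.of fun i l => μ i * f i.1 l
  let F : Matrix (Fin J) (Fin p) ℝ := Matrix.of fun j l => f j l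
  show Dᵀ * V⁻¹ * D =
      Fᵀ * Matrix.diagonal u * F
        - (b / (1 + b * ∑ j, u j)) • (Fᵀ * vecMulVec u u * F)
  -- basic positivity facts
  have hs : ∀ j, 0 ≤ s j := fun j => Finset.sum_nonneg fun k _ => (hμ _).le
  have hcs : ∀ j, (0:ℝ) < 1 + c * s j := fun j => by have := mul_nonneg hc (hs j); linarith
  have hu : ∀ j, 0 ≤ u j := fun j => div_nonneg (hs j) (hcs j).le
  have ht : (0:ℝ) ≤ ∑ j, u j := Finset.sum_nonneg fun j _ => hu j
  have hbt : (0:ℝ) < 1 + b * ∑ j, u j := by have := mul_nonneg hb ht; linarith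
  set t : ℝ := ∑ j, u j with ht_def
  set g : ℝ := b / (1 + b * t) with hg_def
  -- the candidate for V⁻¹ * D
  let w : Fin p → ℝ := fun l => ∑ j, u j * f j l
  let M : Matrix (Σ j : Fin J, Fin (n j)) (Fin p) ℝ :=
    Matrix.of fun i l => (1 + c * s i.1)⁻¹ * (f i.1 l - g * w l)
  -- V is positive definite, hence invertible
  have hPD : V.PosDef := by
    rw [Matrix.posDef_iff_dotProduct_mulVec]
    constructor
    · ext i i'
      simp only [Matrix.conjTranspose_apply, Matrix.of_apply, V, star_trivial]
      by_cases h : i = i'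
      · subst h; ring
      · rw [if_neg h, if_neg (fun e => h e.symm)]
        by_cases h2 : i.1 = i'.1
        · rw [if_pos h2, if_pos h2.symm]; ring
        · rw [if_neg h2, if_neg (fun e => h2 e.symm)]; ring
    · intro x hx
      show 0 < dotProduct x (V *ᵥ x)
      have key2 : ∀ i i' : (Σ j : Fin J, Fin (n j)),
          x i * (V i i' * x i')
          = (if i = i' then μ i * (x i * x i') else 0)
            + (if i.1 = i'.1 then c * ((μ i * x i) * (μ i' * x i')) else 0)
            + b * ((μ i * x i) * (μ i' * x i')) := by
        intro i i'
        show x i * (((((if i = i' then μ i else 0) + (if i.1 = i'.1 then c * μ i * μ i' else 0))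
            + b * μ i * μ i')) * x i') = _
        split_ifs <;> ring
      have expand : dotProduct x (V *ᵥ x)
          = (∑ i, μ i * (x i * x i))
            + c * (∑ j, (∑ k, μ ⟨j, k⟩ * x ⟨j, k⟩) * (∑ k, μ ⟨j, k⟩ * x ⟨j, k⟩))
            + b * ((∑ i, μ i * x i) * (∑ i, μ i * x i)) := by
        have e1 : ∀ i : (Σ j : Fin J, Fin (n j)),
            ∑ i' : (Σ j : Fin J, Fin (n j)), (if i = i' then μ i * (x i * x i') else 0)
            = μ i * (x i * x i) := fun i => sum_eq_ite i _
        have e2 : ∀ i : (Σ j : Fin J, Fin (n j)),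
            ∑ i' : (Σ j : Fin J, Fin (n j)),
              (if i.1 = i'.1 then c * ((μ i * x i) * (μ i' * x i')) else 0)
            = c * ((μ i * x i) * ∑ k, μ ⟨i.1, k⟩ * x ⟨i.1, k⟩) := by
          intro i
          rw [sum_fst_ite i.1 (fun i' => c * ((μ i * x i) * (μ i' * x i')))]
          show (∑ k, c * ((μ i * x i) * (μ ⟨i.1, k⟩ * x ⟨i.1, k⟩))) = _
          rw [← Finset.mul_sum, ← Finset.mul_sum]
        have e3 : ∀ i : (Σ j : Fin J, Fin (n j)),
            ∑ i' : (Σ j : Fin J, Fin (n j)), b * ((μ i * x i) * (μ i' * x i'))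
            = b * ((μ i * x i) * ∑ i' : (Σ j : Fin J, Fin (n j)), μ i' * x i') := by
          intro i
          rw [← Finset.mul_sum, ← Finset.mul_sum]
        show (∑ i : (Σ j : Fin J, Fin (n j)), x i * ∑ i' : (Σ j : Fin J, Fin (n j)), V i i' * x i') = _
        calc (∑ i : (Σ j : Fin J, Fin (n j)), x i * ∑ i' : (Σ j : Fin J, Fin (n j)), V i i' * x i')
            = ∑ i : (Σ j : Fin J, Fin (n j)),
                ((μ i * (x i * x i))
                  + c * ((μ i * x i) * ∑ k, μ ⟨i.1, k⟩ * x ⟨i.1, k⟩)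
                  + b * ((μ i * x i) * ∑ i' : (Σ j : Fin J, Fin (n j)), μ i' * x i')) := by
              refine Finset.sum_congr rfl fun i _ => ?_
              rw [Finset.mul_sum,
                Finset.sum_congr rfl fun i' _ => key2 i i',
                Finset.sum_add_distrib, Finset.sum_add_distrib, e1 i, e2 i, e3 i]
          _ = (∑ i, μ i * (x i * x i))
                + (∑ i : (Σ j : Fin J, Fin (n j)), c * ((μ i * x i) * ∑ k, μ ⟨i.1, k⟩ * x ⟨i.1, k⟩))
                + (∑ i : (Σ j : Fin J, Fin (n j)), b * ((μ i * x i) * ∑ i' : (Σ j : Fin J, Fin (n j)), μ i' * x i')) := by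
              rw [Finset.sum_add_distrib, Finset.sum_add_distrib]
          _ = (∑ i, μ i * (x i * x i))
                + c * (∑ j, (∑ k, μ ⟨j, k⟩ * x ⟨j, k⟩) * (∑ k, μ ⟨j, k⟩ * x ⟨j, k⟩))
                + b * ((∑ i, μ i * x i) * (∑ i, μ i * x i)) := by
              congr 1
              · congr 1
                rw [← Finset.mul_sum]
                congr 1
                rw [sum_sigma_fib (fun i => (μ i * x i) * ∑ k, μ ⟨i.1, k⟩ * x ⟨i.1, k⟩)]
                refine Finset.sum_congr rfl fun j _ => ?_
                show (∑ k, (μ ⟨j, k⟩ * x ⟨j, k⟩) * (∑ k', μ ⟨j, k'⟩ * x ⟨j, k'⟩)) = _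
                rw [← Finset.sum_mul]
              · rw [← Finset.mul_sum]
                congr 1
                rw [← Finset.sum_mul]
      rw [expand]
      have hA : 0 < ∑ i, μ i * (x i * x i) := by
        obtain ⟨i0, hi0⟩ : ∃ i, x i ≠ 0 := by
          by_contra h; push_neg at h; exact hx (funext h)
        exact Finset.sum_pos' (fun i _ => mul_nonneg (hμ i).le (mul_self_nonneg _))
          ⟨i0, Finset.mem_univ _, mul_pos (hμ i0) (mul_self_pos.2 hi0)⟩
      have hB : 0 ≤ c * (∑ j, (∑ k, μ ⟨j, k⟩ * x ⟨j, k⟩) * (∑ k, μ ⟨j, k⟩ * x ⟨j, k⟩)) :=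
        mul_nonneg hc (Finset.sum_nonneg fun j _ => mul_self_nonneg _)
      have hC : 0 ≤ b * ((∑ i, μ i * x i) * (∑ i, μ i * x i)) :=
        mul_nonneg hb (mul_self_nonneg _)
      linarith
  have hdet : IsUnit V.det := isUnit_iff_ne_zero.2 hPD.det_pos.ne'
  have hVM : V * M = D := by
    ext i l
    show (V * M) i l = μ i * f i.1 l
    rw [Matrix.mul_apply]
    have key : ∀ i' : (Σ j : Fin J, Fin (n j)), V i i' * M i' l
        = (if i = i' then μ i * ((1 + c * s i'.1)⁻¹ * (f i'.1 l - g * w l)) else 0)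
          + (if i.1 = i'.1 then (c * μ i) * (μ i' * ((1 + c * s i'.1)⁻¹ * (f i'.1 l - g * w l))) else 0)
          + (b * μ i) * (μ i' * ((1 + c * s i'.1)⁻¹ * (f i'.1 l - g * w l))) := by
      intro i'
      show (((if i = i' then μ i else 0) + (if i.1 = i'.1 then c * μ i * μ i' else 0))
          + b * μ i * μ i') * ((1 + c * s i'.1)⁻¹ * (f i'.1 l - g * w l)) = _
      split_ifs <;> ring
    simp_rw [key]
    rw [Finset.sum_add_distrib, Finset.sum_add_distrib]
    have hS1 : ∑ i' : (Σ j : Fin J, Fin (n j)),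
        (if i = i' then μ i * ((1 + c * s i'.1)⁻¹ * (f i'.1 l - g * w l)) else 0)
        = μ i * ((1 + c * s i.1)⁻¹ * (f i.1 l - g * w l)) :=
      sum_eq_ite i (fun i' => μ i * ((1 + c * s i'.1)⁻¹ * (f i'.1 l - g * w l)))
    have hS2 : ∑ i' : (Σ j : Fin J, Fin (n j)),
        (if i.1 = i'.1 then (c * μ i) * (μ i' * ((1 + c * s i'.1)⁻¹ * (f i'.1 l - g * w l))) else 0)
        = (c * μ i) * (s i.1 * ((1 + c * s i.1)⁻¹ * (f i.1 l - g * w l))) := by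
      rw [sum_fst_ite i.1 (fun i' => (c * μ i) * (μ i' * ((1 + c * s i'.1)⁻¹ * (f i'.1 l - g * w l))))]
      dsimp only
      rw [← Finset.mul_sum, ← Finset.sum_mul]
    have hS3 : ∑ i' : (Σ j : Fin J, Fin (n j)),
        (b * μ i) * (μ i' * ((1 + c * s i'.1)⁻¹ * (f i'.1 l - g * w l)))
        = (b * μ i) * (w l - t * (g * w l)) := by
      rw [← Finset.mul_sum]
      congr 1
      rw [sum_sigma_fib (fun i' => μ i' * ((1 + c * s i'.1)⁻¹ * (f i'.1 l - g * w l)))]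
      dsimp only
      have hj : ∀ j : Fin J, ∑ k, μ ⟨j, k⟩ * ((1 + c * s j)⁻¹ * (f j l - g * w l))
          = u j * f j l - u j * (g * w l) := by
        intro j
        rw [← Finset.sum_mul, show (∑ k, μ ⟨j, k⟩) = s j from rfl,
          show u j = s j / (1 + c * s j) from rfl]
        field_simp
      simp_rw [hj]
      rw [Finset.sum_sub_distrib, ← Finset.sum_mul, ← ht_def,
        show w l = ∑ j, u j * f j l from rfl]
    rw [hS1, hS2, hS3, hg_def]
    have h1 := (hcs i.1).ne'
    have h2 := hbt.ne'
    field_simp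
    ring
  have hinv : V⁻¹ * D = M := by
    rw [← hVM, ← Matrix.mul_assoc, Matrix.nonsing_inv_mul _ hdet, Matrix.one_mul]
  rw [Matrix.mul_assoc, hinv]
  ext l l'
  have hu_def : ∀ j, u j = s j / (1 + c * s j) := fun _ => rfl
  have hlhs : (Dᵀ * M) l l' = ∑ j, (u j * f j l * f j l' - g * (u j * f j l) * w l') := by
    simp only [Matrix.mul_apply, Matrix.transpose_apply, Matrix.of_apply, M, D]
    rw [sum_sigma_fib (fun i => μ i * f i.1 l * ((1 + c * s i.1)⁻¹ * (f i.1 l' - g * w l')))]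
    refine Finset.sum_congr rfl fun j _ => ?_
    simp_rw [mul_assoc]
    rw [← Finset.sum_mul]
    rw [show (∑ k, μ ⟨j, k⟩) = s j from rfl, hu_def j]
    field_simp
  have h1 : (Fᵀ * Matrix.diagonal u * F) l l' = ∑ j, u j * f j l * f j l' := by
    rw [Matrix.mul_apply]
    simp only [Matrix.mul_diagonal, Matrix.transpose_apply, Matrix.of_apply, F]
    exact Finset.sum_congr rfl fun j _ => by ring
  have h2 : (Fᵀ * vecMulVec u u * F) l l' = (∑ j, u j * f j l) * w l' := by
    simp only [Matrix.mul_apply, Matrix.vecMulVec_apply, Matrix.transpose_apply, Matrix.of_apply, F]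
    have : ∀ j' : Fin J, (∑ j, f j l * (u j * u j')) = (∑ j, u j * f j l) * u j' := by
      intro j'; rw [Finset.sum_mul]; exact Finset.sum_congr rfl fun j _ => by ring
    simp_rw [this]
    rw [show w l' = ∑ j', u j' * f j' l' from rfl, Finset.mul_sum]
    exact Finset.sum_congr rfl fun j' _ => by ring
  simp only [Matrix.sub_apply, Matrix.smul_apply, smul_eq_mul]
  rw [hlhs, h1, h2, Finset.sum_sub_distrib]
  congr 1
  rw [Finset.sum_mul]
  rw [Finset.mul_sum]
  exact Finset.sum_congr rfl fun j _ => by ring
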